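/- arXiv:1601.03954 — 2 statements merged into one kernel-verified Lean document; each statement's English description precedes it below -/
import Mathlib

section
/- Let h = (x + y·f)/z with x, y, z ∈ A, y, z ≠ 0, and f a quadratic unit. For ε with |z|·ε < 1, one has the inclusions of F_q-vector spaces z·Λ_{|y|^{−1}ε}(f) ⊆ Λ_ε(h) ⊆ y^{−1}·Λ_{|z|ε}(f), where Λ_δ(g) = { λ ∈ A : ‖λg‖ < δ }. -/
open Polynomial

/-- `‖x‖`: distance from `x ∈ K` to the nearest element of `A = F_q[T]`. -/
noncomputable def pnorm {Fq K : Type*} [Field Fq] [Field K]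
    (ι : Polynomial Fq →+* K) (v : AbsoluteValue K ℝ) (x : K) : ℝ :=
  sInf (Set.range fun p : Polynomial Fq => v (x - ι p))

/-- `Λ_δ(g) = { λ ∈ A : ‖λg‖ < δ }`. -/
def Lambda {Fq K : Type*} [Field Fq] [Field K]
    (ι : Polynomial Fq →+* K) (v : AbsoluteValue K ℝ) (g : K) (δ : ℝ) :
    Set (Polynomial Fq) :=
  {p | pnorm ι v (ι p * g) < δ}

lemma pnorm_bddBelow {Fq K : Type*} [Field Fq] [Field K]
    (ι : Polynomial Fq →+* K) (v : AbsoluteValue K ℝ) (u : K) :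
    BddBelow (Set.range fun p : Polynomial Fq => v (u - ι p)) := by
  refine ⟨0, ?_⟩
  rintro r ⟨p, rfl⟩
  exact v.nonneg _

/-- `pnorm` is invariant under translation by a polynomial. -/
lemma pnorm_add_poly {Fq K : Type*} [Field Fq] [Field K]
    (ι : Polynomial Fq →+* K) (v : AbsoluteValue K ℝ) (u : K) (p : Polynomial Fq) :
    pnorm ι v (u + ι p) = pnorm ι v u := by
  unfold pnorm
  congr 1
  ext r
  constructor
  · rintro ⟨q, rfl⟩
    refine ⟨q - p, ?_⟩
    show v (u - ι (q - p)) = v (u + ι p - ι q)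
    rw [show u - ι (q - p) = u + ι p - ι q from by rw [map_sub]; ring]
  · rintro ⟨q, rfl⟩
    refine ⟨q + p, ?_⟩
    show v (u + ι p - ι (q + p)) = v (u - ι q)
    rw [show u + ι p - ι (q + p) = u - ι q from by rw [map_add]; ring]

/-- `pnorm (ι g * u) ≤ v (ι g) * pnorm u`. -/
lemma pnorm_mul_le {Fq K : Type*} [Field Fq] [Field K]
    (ι : Polynomial Fq →+* K) (v : AbsoluteValue K ℝ) (u : K) (g : Polynomial Fq)
    (hgpos : 0 < v (ι g)) : pnorm ι v (ι g * u) ≤ v (ι g) * pnorm ι v u := by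
  rw [← div_le_iff₀' hgpos]
  unfold pnorm
  refine le_csInf ⟨v (u - ι 0), 0, rfl⟩ ?_
  rintro r ⟨p, rfl⟩
  show pnorm ι v (ι g * u) / v (ι g) ≤ v (u - ι p)
  rw [div_le_iff₀' hgpos, ← v.map_mul, mul_sub, ← map_mul]
  unfold pnorm
  exact csInf_le (pnorm_bddBelow ι v _) ⟨g * p, rfl⟩

/-- With `h = (x + y f)/z`, `x, y, z ∈ A`, `y, z ≠ 0`, `f` a quadratic unit,
and `|z| ε < 1`, one has `z Λ_{|y|⁻¹ε}(f) ⊆ Λ_ε(h) ⊆ y⁻¹ Λ_{|z|ε}(f)` (the latter stated as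
`y Λ_ε(h) ⊆ Λ_{|z|ε}(f)`). -/
theorem stmt_9 {Fq K : Type*} [Field Fq] [Fintype Fq] [Field K]
    (ι : Polynomial Fq →+* K) (v : AbsoluteValue K ℝ)
    (hna : ∀ x' y' : K, v (x' + y') ≤ max (v x') (v y'))
    (hdeg : ∀ g : Polynomial Fq, g ≠ 0 → v (ι g) = (Fintype.card Fq : ℝ) ^ g.natDegree)
    (a : Polynomial Fq) (hd : 0 < a.natDegree) (b : Fq) (hb : b ≠ 0)
    (f : K) (hroot : f ^ 2 = ι a * f + ι (C b))
    (x y z : Polynomial Fq) (hy : y ≠ 0) (hz : z ≠ 0)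
    (h : K) (hh : ι z * h = ι x + ι y * f)
    (ε : ℝ) (hε : (Fintype.card Fq : ℝ) ^ z.natDegree * ε < 1) :
    (∀ lam ∈ Lambda ι v f (((Fintype.card Fq : ℝ) ^ y.natDegree)⁻¹ * ε),
        z * lam ∈ Lambda ι v h ε) ∧
    (∀ lam ∈ Lambda ι v h ε,
        y * lam ∈ Lambda ι v f ((Fintype.card Fq : ℝ) ^ z.natDegree * ε)) := by
  have hq : (0 : ℝ) < (Fintype.card Fq : ℝ) := by positivity
  constructor
  · intro lam hlam
    have key : ι (z * lam) * h = ι y * (ι lam * f) + ι (lam * x) := by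
      rw [map_mul, map_mul, mul_comm (ι z) (ι lam), mul_assoc, hh]
      ring
    have : pnorm ι v (ι (z * lam) * h) = pnorm ι v (ι y * (ι lam * f)) := by
      rw [key, pnorm_add_poly]
    rw [Lambda, Set.mem_setOf_eq, this]
    calc pnorm ι v (ι y * (ι lam * f)) ≤ v (ι y) * pnorm ι v (ι lam * f) :=
          pnorm_mul_le ι v _ y (by rw [hdeg y hy]; positivity)
      _ < v (ι y) * (((Fintype.card Fq : ℝ) ^ y.natDegree)⁻¹ * ε) := by
          apply mul_lt_mul_of_pos_left hlam
          rw [hdeg y hy]; positivity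
      _ = ε := by
          rw [hdeg y hy]
          field_simp
  · intro lam hlam
    have key : ι (y * lam) * f = ι z * (ι lam * h) + ι (-(lam * x)) := by
      rw [map_mul, map_neg, map_mul, mul_comm (ι y) (ι lam), mul_assoc]
      rw [show ι z * (ι lam * h) = ι lam * (ι z * h) from by ring, hh]
      ring
    have : pnorm ι v (ι (y * lam) * f) = pnorm ι v (ι z * (ι lam * h)) := by
      rw [key, pnorm_add_poly]
    rw [Lambda, Set.mem_setOf_eq, this]
    calc pnorm ι v (ι z * (ι lam * h)) ≤ v (ι z) * pnorm ι v (ι lam * h) :=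
          pnorm_mul_le ι v _ z (by rw [hdeg z hz]; positivity)
      _ < (Fintype.card Fq : ℝ) ^ z.natDegree * ε := by
          rw [hdeg z hz]
          apply mul_lt_mul_of_pos_left hlam
          positivity
end

section
/- With h = (x + y·f)/z as above and |z|·ε < 1, the index (codimension as F_q-vector spaces) of z·Λ_{|y|^{−1}ε}(f) in Λ_ε(h) is bounded by a constant depending only on y and z (independent of ε); in fact it is bounded by dim_{F_q}( (y^{−1}A)² / (zA)² ) = 2·(deg y + deg z). -/
open Polynomial

section Aux

variable {Fq K : Type*} [Field Fq] [Field K]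
    (ι : Polynomial Fq →+* K) (v : AbsoluteValue K ℝ)

lemma pnorm_nonneg (x : K) : 0 ≤ pnorm ι v x :=
  Real.sInf_nonneg (by rintro r ⟨p, rfl⟩; exact v.nonneg _)

lemma pnorm_le (x : K) (p : Polynomial Fq) : pnorm ι v x ≤ v (x - ι p) :=
  csInf_le ⟨0, by rintro r ⟨q, rfl⟩; exact v.nonneg _⟩ ⟨p, rfl⟩

lemma pnorm_exists_lt {x : K} {δ : ℝ} (hx : pnorm ι v x < δ) :
    ∃ p : Polynomial Fq, v (x - ι p) < δ := by
  obtain ⟨r, ⟨p, rfl⟩, hr⟩ := exists_lt_of_csInf_lt (Set.range_nonempty _) hx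
  exact ⟨p, hr⟩

end Aux

set_option maxHeartbeats 2000000 in
/-- With `h = (x + y f)/z` and `|z| ε < 1`, the codimension of
`z Λ_{|y|⁻¹ε}(f)` in `Λ_ε(h)` (as `F_q`-vector spaces) is bounded by
`dim_{F_q}((y⁻¹A)²/(zA)²) = 2 (deg y + deg z)`, a constant independent of `ε`. -/
theorem stmt_10 {Fq K : Type*} [Field Fq] [Fintype Fq] [Field K]
    (ι : Polynomial Fq →+* K) (v : AbsoluteValue K ℝ)
    (hna : ∀ x' y' : K, v (x' + y') ≤ max (v x') (v y'))
    (hdeg : ∀ g : Polynomial Fq, g ≠ 0 → v (ι g) = (Fintype.card Fq : ℝ) ^ g.natDegree)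
    (a : Polynomial Fq) (hd : 0 < a.natDegree) (b : Fq) (hb : b ≠ 0)
    (f : K) (hroot : f ^ 2 = ι a * f + ι (C b))
    (x y z : Polynomial Fq) (hy : y ≠ 0) (hz : z ≠ 0)
    (h : K) (hh : ι z * h = ι x + ι y * f)
    (ε : ℝ) (hε : (Fintype.card Fq : ℝ) ^ z.natDegree * ε < 1) :
    Module.finrank Fq
        (↥(Submodule.span Fq (Lambda ι v h ε)) ⧸
          Submodule.comap (Submodule.span Fq (Lambda ι v h ε)).subtype
            (Submodule.span Fq
              ((z * ·) '' Lambda ι v f (((Fintype.card Fq : ℝ) ^ y.natDegree)⁻¹ * ε)))) ≤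
      2 * (y.natDegree + z.natDegree) := by
  classical
  set q : ℝ := (Fintype.card Fq : ℝ) with hqdef
  have hq1 : (1 : ℝ) ≤ q := by
    have h1 : 1 ≤ Fintype.card Fq := Fintype.card_pos
    rw [hqdef]
    exact_mod_cast h1
  have hq0 : (0 : ℝ) < q := lt_of_lt_of_le one_pos hq1
  -- trivial case ε ≤ 0
  rcases le_or_gt ε 0 with hε0 | hε0
  · have hempty : Lambda ι v h ε = (∅ : Set (Polynomial Fq)) := by
      ext p
      simp only [Lambda, Set.mem_setOf_eq, Set.mem_empty_iff_false, iff_false, not_lt]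
      exact le_trans hε0 (pnorm_nonneg ι v _)
    rw [hempty]
    rw [Submodule.span_empty]
    haveI : Subsingleton (↥(⊥ : Submodule Fq (Polynomial Fq))) := by
      infer_instance
    haveI : Subsingleton
        ((↥(⊥ : Submodule Fq (Polynomial Fq))) ⧸
          Submodule.comap (⊥ : Submodule Fq (Polynomial Fq)).subtype
            (Submodule.span Fq
              ((z * ·) '' Lambda ι v f (((Fintype.card Fq : ℝ) ^ y.natDegree)⁻¹ * ε)))) :=
      Quotient.instSubsingletonQuotient _
    rw [Module.finrank_zero_of_subsingleton]
    exact Nat.zero_le _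
  -- main case ε > 0
  -- basic facts about v
  have hvsub : ∀ s t : K, v (s - t) ≤ max (v s) (v t) := by
    intro s t
    have := hna s (-t)
    rwa [v.map_neg, ← sub_eq_add_neg] at this
  have hvlt1 : ∀ p : Polynomial Fq, v (ι p) < 1 → p = 0 := by
    intro p hp
    by_contra hp0
    rw [hdeg p hp0] at hp
    exact absurd hp (not_lt.2 (one_le_pow₀ hq1))
  -- uniqueness of close approximants
  have uniq : ∀ (t : K) (p p' : Polynomial Fq),
      v (t - ι p) < 1 → v (t - ι p') < 1 → p = p' := by
    intro t p p' h1 h2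
    have : v (ι (p - p')) < 1 := by
      have : ι (p - p') = (t - ι p') - (t - ι p) := by
        rw [map_sub]; ring
      rw [this]
      exact lt_of_le_of_lt (hvsub _ _) (max_lt h2 h1)
    have := hvlt1 _ this
    exact sub_eq_zero.mp this
  set δ : ℝ := q ^ z.natDegree * ε with hδdef
  have hδ0 : 0 < δ := mul_pos (pow_pos hq0 _) hε0
  have hδ1 : δ < 1 := hε
  -- Λ_ε(h) is a submodule
  have hadd : ∀ p p' : Polynomial Fq, p ∈ Lambda ι v h ε → p' ∈ Lambda ι v h ε →
      p + p' ∈ Lambda ι v h ε := by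
    intro p p' hp hp'
    obtain ⟨r, hr⟩ := pnorm_exists_lt ι v hp
    obtain ⟨r', hr'⟩ := pnorm_exists_lt ι v hp'
    have key : pnorm ι v (ι (p + p') * h) ≤ v (ι (p + p') * h - ι (r + r')) :=
      pnorm_le ι v _ _
    have : ι (p + p') * h - ι (r + r') = (ι p * h - ι r) + (ι p' * h - ι r') := by
      rw [map_add, map_add]; ring
    rw [this] at key
    exact lt_of_le_of_lt key (lt_of_le_of_lt (hna _ _) (max_lt hr hr'))
  have hsmul : ∀ (c : Fq) (p : Polynomial Fq), p ∈ Lambda ι v h ε →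
      c • p ∈ Lambda ι v h ε := by
    intro c p hp
    rcases eq_or_ne c 0 with rfl | hc
    · show pnorm ι v (ι ((0 : Fq) • p) * h) < ε
      rw [zero_smul, map_zero, zero_mul]
      have h0 : pnorm ι v (0 : K) ≤ v ((0 : K) - ι 0) := pnorm_le ι v _ _
      simp only [map_zero, sub_zero, v.map_zero] at h0
      exact lt_of_le_of_lt h0 hε0
    · obtain ⟨r, hr⟩ := pnorm_exists_lt ι v hp
      have key : pnorm ι v (ι (c • p) * h) ≤ v (ι (c • p) * h - ι (C c * r)) :=
        pnorm_le ι v _ _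
      have heq : ι (c • p) * h - ι (C c * r) = ι (C c) * (ι p * h - ι r) := by
        rw [smul_eq_C_mul, map_mul, map_mul]; ring
      rw [heq, v.map_mul] at key
      have hvc : v (ι (C c)) = 1 := by
        rw [hdeg (C c) (by simpa using hc), natDegree_C, pow_zero]
      rw [hvc, one_mul] at key
      exact lt_of_le_of_lt key hr
  set T : Submodule Fq (Polynomial Fq) :=
    { carrier := Lambda ι v h ε
      add_mem' := fun {p p'} hp hp' => hadd p p' hp hp'
      zero_mem' := by
        show pnorm ι v (ι (0 : Polynomial Fq) * h) < ε
        rw [map_zero, zero_mul]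
        have h0 : pnorm ι v (0 : K) ≤ v ((0 : K) - ι 0) := pnorm_le ι v _ _
        simp only [map_zero, sub_zero, v.map_zero] at h0
        exact lt_of_le_of_lt h0 hε0
      smul_mem' := fun c p hp => hsmul c p hp } with hTdef
  have hspan : Submodule.span Fq (Lambda ι v h ε) = T := by
    apply le_antisymm
    · exact Submodule.span_le.2 (fun w hw => hw)
    · exact fun w hw => Submodule.subset_span hw
  rw [hspan]
  -- each λ ∈ T satisfies `‖(yλ)f‖ < δ`
  have hmemf : ∀ t : T, pnorm ι v (ι (y * (t : Polynomial Fq)) * f) < δ := by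
    rintro ⟨t, ht⟩
    obtain ⟨p, hp⟩ := pnorm_exists_lt ι v ht
    have key : pnorm ι v (ι (y * t) * f) ≤ v (ι (y * t) * f - ι (z * p - x * t)) :=
      pnorm_le ι v _ _
    have heq : ι (y * t) * f - ι (z * p - x * t) = ι z * (ι t * h - ι p) := by
      rw [map_sub, map_mul, map_mul, map_mul]
      have : ι z * (ι t * h) = ι t * (ι z * h) := by ring
      rw [mul_sub, this, hh]
      ring
    rw [heq, v.map_mul, hdeg z hz] at key
    calc pnorm ι v (ι (y * t) * f) ≤ q ^ z.natDegree * v (ι t * h - ι p) := key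
      _ < q ^ z.natDegree * ε := by
          exact mul_lt_mul_of_pos_left hp (pow_pos hq0 _)
  -- the rounding function
  have hex : ∀ t : T, ∃ p : Polynomial Fq, v (ι (y * (t : Polynomial Fq)) * f - ι p) < δ :=
    fun t => pnorm_exists_lt ι v (hmemf t)
  set rf : T → Polynomial Fq := fun t => Classical.choose (hex t) with hrfdef
  have hrf : ∀ t : T, v (ι (y * (t : Polynomial Fq)) * f - ι (rf t)) < δ :=
    fun t => Classical.choose_spec (hex t)
  have hrf_uniq : ∀ (t : T) (p : Polynomial Fq),
      v (ι (y * (t : Polynomial Fq)) * f - ι p) < δ → rf t = p := by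
    intro t p hp
    exact uniq (ι (y * (t : Polynomial Fq)) * f) _ _ (lt_trans (hrf t) hδ1) (lt_trans hp hδ1)
  have hrf_add : ∀ t t' : T, rf (t + t') = rf t + rf t' := by
    intro t t'
    apply hrf_uniq
    have heq : ι (y * ((t + t' : T) : Polynomial Fq)) * f - ι (rf t + rf t')
        = (ι (y * (t : Polynomial Fq)) * f - ι (rf t))
          + (ι (y * (t' : Polynomial Fq)) * f - ι (rf t')) := by
      push_cast [Submodule.coe_add, mul_add, map_add, map_mul]
      ring
    rw [heq]
    exact lt_of_le_of_lt (hna _ _) (max_lt (hrf t) (hrf t'))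
  have hrf_smul : ∀ (c : Fq) (t : T), rf (c • t) = c • rf t := by
    intro c t
    apply hrf_uniq
    have heq : ι (y * ((c • t : T) : Polynomial Fq)) * f - ι (c • rf t)
        = ι (C c) * (ι (y * (t : Polynomial Fq)) * f - ι (rf t)) := by
      simp only [Submodule.coe_smul, smul_eq_C_mul, map_mul]
      ring
    rw [heq, v.map_mul]
    rcases eq_or_ne c 0 with rfl | hc
    · simp only [map_zero, v.map_zero, zero_mul]
      exact hδ0
    · have hvc : v (ι (C c)) = 1 := by
        rw [hdeg (C c) (by simpa using hc), natDegree_C, pow_zero]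
      rw [hvc, one_mul]
      exact hrf t
  -- target module
  set I : Ideal (Polynomial Fq) := Ideal.span {y * z} with hIdef
  set Q := Polynomial Fq ⧸ I with hQdef
  haveI hQfin : Module.Finite Fq (AdjoinRoot (y * z)) :=
    Module.Finite.of_basis (AdjoinRoot.powerBasis (mul_ne_zero hy hz)).basis
  haveI : Module.Finite Fq Q := hQfin
  have hQrank : Module.finrank Fq Q = y.natDegree + z.natDegree := by
    have h1 : Module.finrank Fq (AdjoinRoot (y * z)) = (y * z).natDegree := by
      rw [PowerBasis.finrank (AdjoinRoot.powerBasis (mul_ne_zero hy hz)),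
        AdjoinRoot.powerBasis_dim]
    have h2 : Module.finrank Fq Q = (y * z).natDegree := h1
    rw [h2, natDegree_mul hy hz]
  set mkL : Polynomial Fq →ₗ[Fq] Q := (Ideal.Quotient.mkₐ Fq I).toLinearMap with hmkLdef
  set F : T →ₗ[Fq] Polynomial Fq :=
    { toFun := rf
      map_add' := hrf_add
      map_smul' := hrf_smul } with hFdef
  set G : T →ₗ[Fq] Polynomial Fq :=
    (LinearMap.mulLeft Fq y).comp T.subtype with hGdef
  set Φ : T →ₗ[Fq] Q × Q := (mkL.comp G).prod (mkL.comp F) with hΦdef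
  -- kernel of Φ lands in the span of z Λ_{|y|⁻¹ε}(f)
  set W : Submodule Fq (Polynomial Fq) :=
    Submodule.span Fq ((z * ·) '' Lambda ι v f ((q ^ y.natDegree)⁻¹ * ε)) with hWdef
  have hker : LinearMap.ker Φ ≤ Submodule.comap T.subtype W := by
    rintro t ht
    simp only [LinearMap.mem_ker, hΦdef, LinearMap.prod_apply, Function.prod, Prod.mk_eq_zero,
      LinearMap.comp_apply] at ht
    obtain ⟨h1, h2⟩ := ht
    have hG : (y * (t : Polynomial Fq)) ∈ I := by
      have : G t = y * (t : Polynomial Fq) := rfl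
      rw [← this]
      exact (Ideal.Quotient.eq_zero_iff_mem).mp h1
    have hF : rf t ∈ I := by
      have : mkL (F t) = mkL (rf t) := rfl
      exact (Ideal.Quotient.eq_zero_iff_mem).mp h2
    rw [hIdef, Ideal.mem_span_singleton] at hG hF
    obtain ⟨μ, hμ⟩ := hG
    obtain ⟨ν, hν⟩ := hF
    have htz : (t : Polynomial Fq) = z * μ := by
      have : y * (t : Polynomial Fq) = y * (z * μ) := by rw [hμ]; ring
      exact mul_left_cancel₀ hy this
    have hμmem : μ ∈ Lambda ι v f ((q ^ y.natDegree)⁻¹ * ε) := by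
      have hval : v (ι (y * z)) * v (ι μ * f - ι ν) < δ := by
        have heq : ι (y * (t : Polynomial Fq)) * f - ι (rf t)
            = ι (y * z) * (ι μ * f - ι ν) := by
          rw [hμ, hν]
          simp only [map_mul]
          ring
        have := hrf t
        rwa [heq, v.map_mul] at this
      rw [hdeg (y * z) (mul_ne_zero hy hz), natDegree_mul hy hz, pow_add] at hval
      have hyz0 : (0 : ℝ) < q ^ y.natDegree := pow_pos hq0 _
      have hz0 : (0 : ℝ) < q ^ z.natDegree := pow_pos hq0 _
      have hval2 : v (ι μ * f - ι ν) < (q ^ y.natDegree)⁻¹ * ε := by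
        rw [← lt_div_iff₀' (by positivity)] at hval
        rw [hδdef] at hval
        calc v (ι μ * f - ι ν) < q ^ z.natDegree * ε / (q ^ y.natDegree * q ^ z.natDegree) :=
              hval
          _ = (q ^ y.natDegree)⁻¹ * ε := by
              field_simp
      exact lt_of_le_of_lt (pnorm_le ι v _ _) hval2
    show (t : Polynomial Fq) ∈ W
    apply Submodule.subset_span
    exact ⟨μ, hμmem, htz.symm⟩
  -- conclude via dimension count
  haveI : Module.Finite Fq (Q × Q) := Module.Finite.prod
  have hQQ : Module.finrank Fq (Q × Q) = 2 * (y.natDegree + z.natDegree) := by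
    rw [Module.finrank_prod, hQrank]; ring
  -- T ⧸ ker Φ is finite dimensional, with finrank ≤ finrank (Q × Q)
  have e1 : (T ⧸ LinearMap.ker Φ) ≃ₗ[Fq] LinearMap.range Φ := Φ.quotKerEquivRange
  haveI : Module.Finite Fq (LinearMap.range Φ) := FiniteDimensional.finiteDimensional_submodule (LinearMap.range Φ)
  haveI : Module.Finite Fq (T ⧸ LinearMap.ker Φ) := Module.Finite.equiv e1.symm
  have h2 : Module.finrank Fq (T ⧸ LinearMap.ker Φ) ≤ 2 * (y.natDegree + z.natDegree) := by
    rw [e1.finrank_eq, ← hQQ]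
    exact Submodule.finrank_le _
  -- surjection from T ⧸ ker Φ onto the quotient in question
  have hle : LinearMap.ker Φ ≤ Submodule.comap LinearMap.id (Submodule.comap T.subtype W) := by
    simpa using hker
  set π : (T ⧸ LinearMap.ker Φ) →ₗ[Fq] (T ⧸ Submodule.comap T.subtype W) :=
    Submodule.mapQ (LinearMap.ker Φ) (Submodule.comap T.subtype W) LinearMap.id hle with hπdef
  have hπsurj : Function.Surjective π := by
    intro w
    obtain ⟨t, rfl⟩ := Submodule.Quotient.mk_surjective _ w
    exact ⟨Submodule.Quotient.mk t, by rw [hπdef, Submodule.mapQ_apply]; rfl⟩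
  calc Module.finrank Fq (T ⧸ Submodule.comap T.subtype W)
      ≤ Module.finrank Fq (T ⧸ LinearMap.ker Φ) :=
        Module.finrank_le_finrank_of_rank_le_rank
          (by simpa using π.rank_le_of_surjective hπsurj) (Module.rank_lt_aleph0 _ _)
    _ ≤ 2 * (y.natDegree + z.natDegree) := h2
end
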